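/- Let A be a finite alphabet with commutative bracket [,]. There is a unique algebra morphism ψ from the Butcher–Connes–Kreimer Hopf algebra H(A) (with forest product) to the quasi-shuffle algebra (T(A), ⊛) satisfying ψ(1) = 1, ψ(B_a^+(f)) = ψ(f)a for every letter a and forest f, and ψ(στ) = ψ(σ) ⊛ ψ(τ); moreover ψ is a morphism of coalgebras: ∇ψ(h) = (ψ ⊗ ψ)Δh for all h ∈ H(A), where Δ is the BCK coproduct and ∇ is deconcatenation. -/

import Mathlib

open Finsupp
open scoped Classical TensorProduct

noncomputable section

abbrev TA (A : Type) := List A →₀ ℝ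

def wordE {A : Type} (w : List A) : TA A := Finsupp.single w 1

def appLetter {A : Type} (a : A) : TA A →ₗ[ℝ] TA A :=
  Finsupp.lmapDomain ℝ ℝ (fun u => u ++ [a])

def appGen {A : Type} (c : A →₀ ℝ) (y : TA A) : TA A :=
  c.sum fun x r => r • appLetter x y

def IsQuasiShuffle {A : Type} (br : A → A → (A →₀ ℝ))
    (M : TA A →ₗ[ℝ] TA A →ₗ[ℝ] TA A) : Prop :=
  (∀ x : TA A, M (wordE []) x = x) ∧ (∀ x : TA A, M x (wordE []) = x) ∧
  ∀ (v w : List A) (a b : A),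
    M (wordE (v ++ [a])) (wordE (w ++ [b])) =
      appLetter a (M (wordE v) (wordE (w ++ [b]))) +
      appLetter b (M (wordE (v ++ [a])) (wordE w)) +
      appGen (br a b) (M (wordE v) (wordE w))

def brExt {A : Type} (br : A → A → (A →₀ ℝ)) (f g : A →₀ ℝ) : A →₀ ℝ :=
  f.sum fun a ra => g.sum fun b rb => (ra * rb) • br a b

/-- `A`-decorated rooted trees. -/
inductive RT (A : Type) : Type
  | node : A → List (RT A) → RT A

/-- The Butcher–Connes–Kreimer algebra: the free vector space on (planar) forests,
with the forest product. -/
abbrev HBCK (A : Type) := MonoidAlgebra ℝ (FreeMonoid (RT A))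

/-- The grafting operator `B⁺_a`. -/
def Bplus {A : Type} (a : A) : HBCK A →ₗ[ℝ] HBCK A :=
  MonoidAlgebra.mapDomainLinearMap ℝ ℝ
    (fun f : FreeMonoid (RT A) => FreeMonoid.of (RT.node a (FreeMonoid.toList f)))

/-- The basis forest `f` as an element of the BCK algebra. -/
def fE {A : Type} (f : FreeMonoid (RT A)) : HBCK A := MonoidAlgebra.single f 1

mutual
/-- The BCK coproduct on a tree. -/
def deltaT {A : Type} : RT A → HBCK A ⊗[ℝ] HBCK A
  | RT.node a f =>
      fE (FreeMonoid.ofList [RT.node a f]) ⊗ₜ[ℝ] (1 : HBCK A) +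
      LinearMap.lTensor (HBCK A) (Bplus a) (deltaF f)
/-- The BCK coproduct on a forest (multiplicative extension). -/
def deltaF {A : Type} : List (RT A) → HBCK A ⊗[ℝ] HBCK A
  | [] => 1
  | t :: f => deltaT t * deltaF f
end

/-- The BCK coproduct, extended linearly. -/
def deltaBCK (A : Type) : HBCK A →ₗ[ℝ] HBCK A ⊗[ℝ] HBCK A :=
  (Finsupp.lsum ℝ fun f => LinearMap.toSpanSingleton ℝ (HBCK A ⊗[ℝ] HBCK A)
    (deltaF (FreeMonoid.toList f))) ∘ₗ (MonoidAlgebra.coeffLinearEquiv ℝ).toLinearMap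

/-- The deconcatenation coproduct on `T(A)`. -/
def deconc (A : Type) : TA A →ₗ[ℝ] TA A ⊗[ℝ] TA A :=
  Finsupp.lsum ℝ fun u => LinearMap.toSpanSingleton ℝ (TA A ⊗[ℝ] TA A)
    (∑ k ∈ Finset.range (u.length + 1), wordE (u.take k) ⊗ₜ[ℝ] wordE (u.drop k))


/-! ### Auxiliary lemmas -/

section Aux

variable {A : Type}

lemma appLetter_wordE (a : A) (u : List A) :
    appLetter a (wordE u) = wordE (u ++ [a]) := by
  simp [appLetter, wordE, Finsupp.lmapDomain_apply, Finsupp.mapDomain_single]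

/-- `appGen` as a linear map in its vector argument, linearly parametrized by `c`. -/
def AGL : (A →₀ ℝ) →ₗ[ℝ] (TA A →ₗ[ℝ] TA A) :=
  Finsupp.lsum ℝ fun x => LinearMap.toSpanSingleton ℝ (TA A →ₗ[ℝ] TA A) (appLetter x)

lemma AGL_apply (c : A →₀ ℝ) (y : TA A) :
    AGL c y = c.sum fun x r => r • appLetter x y := by
  simp [AGL, Finsupp.lsum_apply, Finsupp.sum, LinearMap.sum_apply,
    LinearMap.toSpanSingleton_apply]

lemma appGen_eq (c : A →₀ ℝ) (y : TA A) : appGen c y = AGL c y := by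
  rw [AGL_apply]; rfl

lemma AGL_single_one (a : A) : AGL (Finsupp.single a (1:ℝ)) = appLetter a := by
  simp [AGL]

lemma brExt_single_one_left (br : A → A → (A →₀ ℝ)) (a : A) (e : A →₀ ℝ) :
    brExt br (Finsupp.single a (1:ℝ)) e = e.sum fun b rb => rb • br a b := by
  rw [brExt, Finsupp.sum_single_index]
  · simp
  · simp

lemma brExt_single_one_right (br : A → A → (A →₀ ℝ)) (c : A) (e : A →₀ ℝ) :
    brExt br e (Finsupp.single c (1:ℝ)) = e.sum fun a ra => ra • br a c := by
  rw [brExt]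
  congr 1
  ext a ra
  rw [Finsupp.sum_single_index] <;> simp

end Aux

section QS

variable {A : Type} {br : A → A → (A →₀ ℝ)} {M : TA A →ₗ[ℝ] TA A →ₗ[ℝ] TA A}

lemma fsum_apply {ι M N : Type*} [AddCommMonoid M] [Module ℝ M] [AddCommMonoid N]
    [Module ℝ N] (f : ι →₀ ℝ) (g : ι → ℝ → (M →ₗ[ℝ] N)) (y : M) :
    (f.sum g) y = f.sum fun i r => g i r y := by
  classical
  simp [Finsupp.sum, LinearMap.sum_apply]

lemma AGL_sum_apply {ι : Type*} (e : ι →₀ ℝ) (g : ι → ℝ → (A →₀ ℝ)) (y : TA A) :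
    AGL (e.sum g) y = e.sum fun i r => AGL (g i r) y := by
  rw [map_finsuppSum, fsum_apply]

lemma M_AGL_left (e : A →₀ ℝ) (z y : TA A) :
    M (AGL e z) y = e.sum fun x r => r • M (appLetter x z) y := by
  rw [AGL_apply, map_finsuppSum, fsum_apply]
  simp [map_smul]

lemma M_AGL_right (e : A →₀ ℝ) (z y : TA A) :
    M y (AGL e z) = e.sum fun x r => r • M y (appLetter x z) := by
  rw [AGL_apply, map_finsuppSum]
  simp [map_smul]

lemma qs_rec (hM : IsQuasiShuffle br M) (v w : List A) (a b : A) :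
    M (wordE (v ++ [a])) (wordE (w ++ [b])) =
      appLetter a (M (wordE v) (wordE (w ++ [b]))) +
      appLetter b (M (wordE (v ++ [a])) (wordE w)) +
      AGL (br a b) (M (wordE v) (wordE w)) := by
  rw [hM.2.2 v w a b, appGen_eq]

lemma single_eq_smul_wordE (w : List A) (r : ℝ) :
    (Finsupp.single w r : TA A) = r • wordE w := by
  simp [wordE, Finsupp.smul_single]

/-- L1: recursion extended linearly in the second argument. -/
lemma qs_recL (hM : IsQuasiShuffle br M) (v : List A) (a b : A) (y : TA A) :
    M (wordE (v ++ [a])) (appLetter b y) =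
      appLetter a (M (wordE v) (appLetter b y)) +
      appLetter b (M (wordE (v ++ [a])) y) +
      AGL (br a b) (M (wordE v) y) := by
  induction y using Finsupp.induction_linear with
  | zero => simp
  | add f g hf hg => simp only [map_add, hf, hg]; abel
  | single w r =>
      rw [single_eq_smul_wordE]
      simp only [map_smul, appLetter_wordE, qs_rec hM]
      simp only [smul_add]

/-- L2: recursion extended linearly in the first argument. -/
lemma qs_recR (hM : IsQuasiShuffle br M) (w : List A) (a b : A) (x : TA A) :
    M (appLetter a x) (wordE (w ++ [b])) =
      appLetter a (M x (wordE (w ++ [b]))) +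
      appLetter b (M (appLetter a x) (wordE w)) +
      AGL (br a b) (M x (wordE w)) := by
  induction x using Finsupp.induction_linear with
  | zero => simp
  | add f g hf hg =>
      simp only [map_add, LinearMap.add_apply, hf, hg]; abel
  | single u r =>
      rw [single_eq_smul_wordE]
      simp only [map_smul, LinearMap.smul_apply, appLetter_wordE, qs_rec hM]
      simp only [smul_add]

/-- L3: recursion fully extended. -/
lemma qs_recB (hM : IsQuasiShuffle br M) (a b : A) (x y : TA A) :
    M (appLetter a x) (appLetter b y) =
      appLetter a (M x (appLetter b y)) +
      appLetter b (M (appLetter a x) y) +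
      AGL (br a b) (M x y) := by
  induction x using Finsupp.induction_linear with
  | zero => simp
  | add f g hf hg =>
      simp only [map_add, LinearMap.add_apply, hf, hg]; abel
  | single u r =>
      rw [single_eq_smul_wordE]
      simp only [map_smul, LinearMap.smul_apply, appLetter_wordE, qs_recL hM]
      simp only [smul_add]

/-- L5: recursion with `AGL` on the left. -/
lemma qs_recAG_left (hM : IsQuasiShuffle br M) (w : List A) (c : A) (e : A →₀ ℝ)
    (z : TA A) :
    M (AGL e z) (wordE (w ++ [c])) =
      AGL e (M z (wordE (w ++ [c]))) +
      appLetter c (M (AGL e z) (wordE w)) +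
      AGL (brExt br e (Finsupp.single c 1)) (M z (wordE w)) := by
  rw [brExt_single_one_right, AGL_sum_apply, M_AGL_left, M_AGL_left,
    AGL_apply e (M z (wordE (w ++ [c])))]
  simp only [qs_recR hM, smul_add, Finsupp.sum_add]
  congr 1
  · congr 1
    rw [map_finsuppSum (appLetter c)]
    simp only [map_smul]
  · simp only [map_smul, LinearMap.smul_apply]

end QS

section Assoc

variable {A : Type} {br : A → A → (A →₀ ℝ)} {M : TA A →ₗ[ℝ] TA A →ₗ[ℝ] TA A}

/-- L5': recursion with `AGL` on the right. -/
lemma qs_recAG_right (hM : IsQuasiShuffle br M) (v : List A) (a : A) (e : A →₀ ℝ)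
    (z : TA A) :
    M (wordE (v ++ [a])) (AGL e z) =
      appLetter a (M (wordE v) (AGL e z)) +
      AGL e (M (wordE (v ++ [a])) z) +
      AGL (brExt br (Finsupp.single a 1) e) (M (wordE v) z) := by
  rw [brExt_single_one_left, AGL_sum_apply, M_AGL_right, M_AGL_right,
    AGL_apply e (M (wordE (v ++ [a])) z)]
  simp only [qs_recL hM, smul_add, Finsupp.sum_add]
  congr 1
  · congr 1
    rw [map_finsuppSum (appLetter a)]
    simp only [map_smul]
  · simp only [map_smul, LinearMap.smul_apply]

lemma brExt_single_single (br : A → A → (A →₀ ℝ)) (a b : A) :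
    brExt br (Finsupp.single a 1) (Finsupp.single b 1) = br a b := by
  rw [brExt_single_one_left, Finsupp.sum_single_index] <;> simp

lemma M_assoc_words
    (hM : IsQuasiShuffle br M)
    (hbr_assoc : ∀ f g h : A →₀ ℝ, brExt br (brExt br f g) h = brExt br f (brExt br g h)) :
    ∀ (n : ℕ) (u v w : List A), u.length + v.length + w.length ≤ n →
      M (M (wordE u) (wordE v)) (wordE w) = M (wordE u) (M (wordE v) (wordE w)) := by
  intro n
  induction n with
  | zero =>
      intro u v w h
      have hu : u = [] := by
        cases u with | nil => rfl | cons x l => simp at h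
      subst hu; rw [hM.1, hM.1]
  | succ n ih =>
      intro u v w h
      rcases List.eq_nil_or_concat' u with rfl | ⟨u', a, rfl⟩
      · rw [hM.1, hM.1]
      rcases List.eq_nil_or_concat' v with rfl | ⟨v', b, rfl⟩
      · rw [hM.2.1, hM.1]
      rcases List.eq_nil_or_concat' w with rfl | ⟨w', c, rfl⟩
      · rw [hM.2.1, hM.2.1]
      simp only [List.length_append, List.length_singleton] at h
      -- expand the left-hand side
      rw [qs_rec hM u' v' a b]
      simp only [map_add, LinearMap.add_apply]
      rw [qs_recR hM w' a c, qs_recR hM w' b c, qs_recAG_left hM w' c (br a b)]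
      -- reassociate the seven canonical inner products via the IH
      rw [ih u' (v' ++ [b]) (w' ++ [c]) (by first | omega | (simp only [List.length_append, List.length_singleton]; omega))]
      rw [ih (u' ++ [a]) v' (w' ++ [c]) (by first | omega | (simp only [List.length_append, List.length_singleton]; omega))]
      rw [ih u' v' (w' ++ [c]) (by first | omega | (simp only [List.length_append, List.length_singleton]; omega))]
      rw [ih u' (v' ++ [b]) w' (by first | omega | (simp only [List.length_append, List.length_singleton]; omega))]
      rw [ih (u' ++ [a]) v' w' (by first | omega | (simp only [List.length_append, List.length_singleton]; omega))]
      rw [ih u' v' w' (by first | omega | (simp only [List.length_append, List.length_singleton]; omega))]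
      -- expand the right-hand side
      rw [qs_rec hM v' w' b c]
      simp only [map_add, LinearMap.add_apply]
      rw [qs_recL hM u' a b, qs_recL hM u' a c, qs_recAG_right hM u' a (br b c)]
      rw [← ih (u' ++ [a]) (v' ++ [b]) w' (by first | omega | (simp only [List.length_append, List.length_singleton]; omega))]
      rw [qs_rec hM u' v' a b]
      simp only [map_add, LinearMap.add_apply]
      have hbr : brExt br (br a b) (Finsupp.single c 1) =
          brExt br (Finsupp.single a 1) (br b c) := by
        rw [← brExt_single_single br a b, ← brExt_single_single br b c,
          hbr_assoc, brExt_single_single]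
      rw [hbr]
      abel

end Assoc

section Psi

variable {A : Type} {br : A → A → (A →₀ ℝ)}

lemma M_assoc {M : TA A →ₗ[ℝ] TA A →ₗ[ℝ] TA A}
    (hM : IsQuasiShuffle br M)
    (hbr_assoc : ∀ f g h : A →₀ ℝ, brExt br (brExt br f g) h = brExt br f (brExt br g h))
    (x y z : TA A) : M (M x y) z = M x (M y z) := by
  induction x using Finsupp.induction_linear with
  | zero => simp
  | add f g hf hg => simp only [map_add, LinearMap.add_apply, hf, hg]
  | single u r =>
    induction y using Finsupp.induction_linear with
    | zero => simp
    | add f g hf hg => simp only [map_add, LinearMap.add_apply, hf, hg]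
    | single v s =>
      induction z using Finsupp.induction_linear with
      | zero => simp
      | add f g hf hg => simp only [map_add, hf, hg]
      | single w t =>
        simp only [single_eq_smul_wordE, map_smul, LinearMap.smul_apply]
        rw [M_assoc_words hM hbr_assoc (u.length + v.length + w.length) u v w le_rfl]

variable (M : TA A →ₗ[ℝ] TA A →ₗ[ℝ] TA A)

mutual
/-- Arborification of a tree. -/
def psiT : RT A → TA A
  | RT.node a f => appLetter a (psiF f)
/-- Arborification of a forest. -/
def psiF : List (RT A) → TA A
  | [] => wordE []
  | t :: f => M (psiT t) (psiF f)
end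

/-- The contracting arborification, extended linearly. -/
def psi : HBCK A →ₗ[ℝ] TA A :=
  (Finsupp.lsum ℝ fun f => LinearMap.toSpanSingleton ℝ (TA A) (psiF M (FreeMonoid.toList f))) ∘ₗ
    (MonoidAlgebra.coeffLinearEquiv ℝ).toLinearMap

lemma psi_fE (f : FreeMonoid (RT A)) : psi M (fE f) = psiF M (FreeMonoid.toList f) := by
  rw [psi, fE, LinearMap.comp_apply, LinearEquiv.coe_coe, MonoidAlgebra.coeffLinearEquiv_apply,
    MonoidAlgebra.coeff_single]
  erw [Finsupp.lsum_single]
  rw [LinearMap.toSpanSingleton_apply, one_smul]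

lemma psi_one : psi M (1 : HBCK A) = wordE [] := by
  rw [MonoidAlgebra.one_def]
  have : psi M (fE (1 : FreeMonoid (RT A))) = psiF M [] := psi_fE M 1
  simpa [fE, psiF] using this

lemma psiF_append (hM : IsQuasiShuffle br M)
    (hbr_assoc : ∀ f g h : A →₀ ℝ, brExt br (brExt br f g) h = brExt br f (brExt br g h))
    (u v : List (RT A)) :
    psiF M (u ++ v) = M (psiF M u) (psiF M v) := by
  induction u with
  | nil => simp [psiF, hM.1]
  | cons t u ihu =>
      simp only [List.cons_append, psiF, List.append_eq, ihu]
      rw [M_assoc hM hbr_assoc]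

end Psi

section Deconc

variable {A : Type}

lemma deconc_wordE (u : List A) :
    deconc A (wordE u) =
      ∑ k ∈ Finset.range (u.length + 1), wordE (u.take k) ⊗ₜ[ℝ] wordE (u.drop k) := by
  rw [deconc, wordE]
  erw [Finsupp.lsum_single]
  rw [LinearMap.toSpanSingleton_apply, one_smul]

lemma deconc_appLetter (a : A) (x : TA A) :
    deconc A (appLetter a x) =
      LinearMap.lTensor (TA A) (appLetter a) (deconc A x) +
      (appLetter a x) ⊗ₜ[ℝ] wordE [] := by
  induction x using Finsupp.induction_linear with
  | zero => simp
  | add f g hf hg =>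
      simp only [map_add, hf, hg, TensorProduct.add_tmul]
      module
  | single u r =>
      rw [single_eq_smul_wordE]
      simp only [map_smul, TensorProduct.smul_tmul', appLetter_wordE]
      rw [deconc_wordE, deconc_wordE, ← TensorProduct.smul_tmul', ← smul_add]
      congr 1
      simp only [List.length_append, List.length_singleton]
      rw [Finset.sum_range_succ]
      simp only [map_sum, LinearMap.lTensor_tmul, appLetter_wordE]
      congr 1
      · apply Finset.sum_congr rfl
        intro k hk
        have hk' : k ≤ u.length := Nat.lt_succ_iff.mp (Finset.mem_range.mp hk)
        rw [List.take_append_of_le_length hk', List.drop_append_of_le_length hk']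
      · have hl : u.length + 1 = (u ++ [a]).length := by simp
        rw [hl, List.take_length, List.drop_length]

lemma AGL_eq_sum (c : A →₀ ℝ) : AGL c = c.sum fun x r => r • appLetter x := by
  apply LinearMap.ext
  intro y
  rw [AGL_apply, fsum_apply]
  simp only [LinearMap.smul_apply]

lemma lTensor_AGL (e : A →₀ ℝ) (y : TA A ⊗[ℝ] TA A) :
    LinearMap.lTensor (TA A) (AGL e) y =
      e.sum fun i r => r • LinearMap.lTensor (TA A) (appLetter i) y := by
  have h : LinearMap.lTensor (TA A) (AGL e) =
      e.sum fun i r => r • LinearMap.lTensor (TA A) (appLetter i) := by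
    rw [← LinearMap.coe_lTensorHom, AGL_eq_sum,
      map_finsuppSum (LinearMap.lTensorHom (TA A))]
    simp only [map_smul, LinearMap.coe_lTensorHom]
  rw [h, fsum_apply]
  simp only [LinearMap.smul_apply]

lemma deconc_AGL (e : A →₀ ℝ) (x : TA A) :
    deconc A (AGL e x) =
      LinearMap.lTensor (TA A) (AGL e) (deconc A x) +
      (AGL e x) ⊗ₜ[ℝ] wordE [] := by
  rw [AGL_apply, map_finsuppSum (deconc A)]
  simp only [map_smul, deconc_appLetter, smul_add]
  rw [Finsupp.sum_add, lTensor_AGL]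
  congr 1

  rw [Finsupp.sum, Finsupp.sum, TensorProduct.sum_tmul]
  exact Finset.sum_congr rfl fun i _ => TensorProduct.smul_tmul' _ _ _

end Deconc

section Mten

variable {A : Type} {br : A → A → (A →₀ ℝ)}

/-- The componentwise quasi-shuffle product on `T(A) ⊗ T(A)`. -/
def Mten (M : TA A →ₗ[ℝ] TA A →ₗ[ℝ] TA A) :
    TA A ⊗[ℝ] TA A →ₗ[ℝ] TA A ⊗[ℝ] TA A →ₗ[ℝ] TA A ⊗[ℝ] TA A :=
  (TensorProduct.homTensorHomMap (RingHom.id ℝ) (TA A) (TA A) (TA A) (TA A)).comp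
    (TensorProduct.map M M)

variable {M : TA A →ₗ[ℝ] TA A →ₗ[ℝ] TA A}

lemma Mten_tmul (x y z w : TA A) :
    Mten M (x ⊗ₜ[ℝ] y) (z ⊗ₜ[ℝ] w) = M x z ⊗ₜ[ℝ] M y w := by
  simp [Mten, TensorProduct.homTensorHomMap_apply, TensorProduct.map_tmul]

lemma Mten_unit_right (hM : IsQuasiShuffle br M) (P : TA A ⊗[ℝ] TA A) :
    Mten M P (wordE [] ⊗ₜ[ℝ] wordE []) = P := by
  induction P with
  | zero => simp
  | add x y hx hy => simp only [map_add, LinearMap.add_apply, hx, hy]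
  | tmul x y => rw [Mten_tmul, hM.2.1, hM.2.1]

lemma Mten_unit_left (hM : IsQuasiShuffle br M) (P : TA A ⊗[ℝ] TA A) :
    Mten M (wordE [] ⊗ₜ[ℝ] wordE []) P = P := by
  induction P with
  | zero => simp
  | add x y hx hy => simp only [map_add, hx, hy]
  | tmul x y => rw [Mten_tmul, hM.1, hM.1]

lemma Mten_lT_lT (hM : IsQuasiShuffle br M) (a b : A) (P Q : TA A ⊗[ℝ] TA A) :
    Mten M (LinearMap.lTensor (TA A) (appLetter a) P)
           (LinearMap.lTensor (TA A) (appLetter b) Q) =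
      LinearMap.lTensor (TA A) (appLetter a)
        (Mten M P (LinearMap.lTensor (TA A) (appLetter b) Q)) +
      LinearMap.lTensor (TA A) (appLetter b)
        (Mten M (LinearMap.lTensor (TA A) (appLetter a) P) Q) +
      LinearMap.lTensor (TA A) (AGL (br a b)) (Mten M P Q) := by
  induction P with
  | zero => simp
  | add x y hx hy =>
      simp only [map_add, LinearMap.add_apply, hx, hy]
      module
  | tmul p1 p2 =>
    induction Q with
    | zero => simp
    | add x y hx hy =>
        simp only [map_add, hx, hy]
        module
    | tmul q1 q2 =>
      simp only [LinearMap.lTensor_tmul, Mten_tmul, qs_recB hM]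
      simp only [TensorProduct.tmul_add, map_add]

lemma Mten_lT_eps (hM : IsQuasiShuffle br M) (a : A) (P : TA A ⊗[ℝ] TA A) (y : TA A) :
    Mten M (LinearMap.lTensor (TA A) (appLetter a) P) (y ⊗ₜ[ℝ] wordE []) =
      LinearMap.lTensor (TA A) (appLetter a) (Mten M P (y ⊗ₜ[ℝ] wordE [])) := by
  induction P with
  | zero => simp
  | add x y hx hy => simp only [map_add, LinearMap.add_apply, hx, hy]
  | tmul p1 p2 => simp only [LinearMap.lTensor_tmul, Mten_tmul, hM.2.1]

lemma Mten_eps_lT (hM : IsQuasiShuffle br M) (b : A) (x : TA A) (Q : TA A ⊗[ℝ] TA A) :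
    Mten M (x ⊗ₜ[ℝ] wordE []) (LinearMap.lTensor (TA A) (appLetter b) Q) =
      LinearMap.lTensor (TA A) (appLetter b) (Mten M (x ⊗ₜ[ℝ] wordE []) Q) := by
  induction Q with
  | zero => simp
  | add x y hx hy => simp only [map_add, hx, hy]
  | tmul q1 q2 => simp only [LinearMap.lTensor_tmul, Mten_tmul, hM.1]

end Mten

section Compat

variable {A : Type} {br : A → A → (A →₀ ℝ)} {M : TA A →ₗ[ℝ] TA A →ₗ[ℝ] TA A}

lemma deconc_eps : deconc A (wordE ([] : List A)) = wordE [] ⊗ₜ[ℝ] wordE [] := by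
  rw [deconc_wordE]; simp

lemma deconc_M_words (hM : IsQuasiShuffle br M) :
    ∀ (n : ℕ) (u v : List A), u.length + v.length ≤ n →
      deconc A (M (wordE u) (wordE v)) =
        Mten M (deconc A (wordE u)) (deconc A (wordE v)) := by
  intro n
  induction n with
  | zero =>
      intro u v h
      have hu : u = [] := by cases u with | nil => rfl | cons x l => simp at h
      have hv : v = [] := by
        subst hu; cases v with | nil => rfl | cons x l => simp at h
      subst hu; subst hv
      rw [hM.1, deconc_eps, Mten_unit_left hM]
  | succ n ih =>
      intro u v h
      rcases List.eq_nil_or_concat' u with rfl | ⟨u', a, rfl⟩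
      · rw [hM.1, deconc_eps, Mten_unit_left hM]
      rcases List.eq_nil_or_concat' v with rfl | ⟨v', b, rfl⟩
      · rw [hM.2.1, deconc_eps, Mten_unit_right hM]
      simp only [List.length_append, List.length_singleton] at h
      have hDa : deconc A (wordE (u' ++ [a])) =
          LinearMap.lTensor (TA A) (appLetter a) (deconc A (wordE u')) +
          wordE (u' ++ [a]) ⊗ₜ[ℝ] wordE [] := by
        rw [← appLetter_wordE a u', deconc_appLetter, appLetter_wordE]
      have hDb : deconc A (wordE (v' ++ [b])) =
          LinearMap.lTensor (TA A) (appLetter b) (deconc A (wordE v')) +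
          wordE (v' ++ [b]) ⊗ₜ[ℝ] wordE [] := by
        rw [← appLetter_wordE b v', deconc_appLetter, appLetter_wordE]
      rw [qs_rec hM u' v' a b]
      simp only [map_add]
      rw [deconc_appLetter a, deconc_appLetter b, deconc_AGL]
      rw [ih u' (v' ++ [b]) (by first | omega | (simp only [List.length_append, List.length_singleton]; omega))]
      rw [ih (u' ++ [a]) v' (by first | omega | (simp only [List.length_append, List.length_singleton]; omega))]
      rw [ih u' v' (by omega)]
      rw [hDa, hDb]
      simp only [map_add, LinearMap.add_apply]
      rw [Mten_lT_lT hM, Mten_lT_eps hM, Mten_eps_lT hM, Mten_tmul, hM.1,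
        qs_rec hM u' v' a b]
      simp only [TensorProduct.add_tmul]
      module

lemma deconc_M (hM : IsQuasiShuffle br M) (x y : TA A) :
    deconc A (M x y) = Mten M (deconc A x) (deconc A y) := by
  induction x using Finsupp.induction_linear with
  | zero => simp
  | add f g hf hg => simp only [map_add, LinearMap.add_apply, hf, hg]
  | single u r =>
    induction y using Finsupp.induction_linear with
    | zero => simp
    | add f g hf hg => simp only [map_add, hf, hg]
    | single v s =>
      simp only [single_eq_smul_wordE, map_smul, LinearMap.smul_apply]
      rw [deconc_M_words hM (u.length + v.length) u v le_rfl]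

end Compat

section PsiAlg

variable {A : Type} {br : A → A → (A →₀ ℝ)} {M : TA A →ₗ[ℝ] TA A →ₗ[ℝ] TA A}

lemma hbck_single_eq_smul (f : FreeMonoid (RT A)) (r : ℝ) :
    (MonoidAlgebra.single f r : HBCK A) = r • fE f := by
  rw [fE, MonoidAlgebra.smul_single, smul_eq_mul, mul_one]

lemma psiF_single (hM : IsQuasiShuffle br M) (t : RT A) :
    psiF M [t] = psiT M t := by
  simp only [psiF]
  rw [hM.2.1]

lemma psi_fE_ofList (f : List (RT A)) :
    psi M (fE (FreeMonoid.ofList f)) = psiF M f := by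
  rw [psi_fE, FreeMonoid.toList_ofList]

lemma psi_mul (hM : IsQuasiShuffle br M)
    (hbr_assoc : ∀ f g h : A →₀ ℝ, brExt br (brExt br f g) h = brExt br f (brExt br g h))
    (x y : HBCK A) : psi M (x * y) = M (psi M x) (psi M y) := by
  induction x using MonoidAlgebra.induction_linear with
  | zero => simp
  | add f g hf hg =>
      simp only [add_mul, map_add, LinearMap.add_apply, hf, hg]
  | single f r =>
    induction y using MonoidAlgebra.induction_linear with
    | zero => simp
    | add p q hp hq => simp only [mul_add, map_add, hp, hq]
    | single g s =>
        rw [MonoidAlgebra.single_mul_single]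
        rw [show (MonoidAlgebra.single (f * g) (r * s) : HBCK A) =
          (r * s) • fE (f * g) from hbck_single_eq_smul _ _]
        rw [hbck_single_eq_smul, hbck_single_eq_smul]
        simp only [map_smul, LinearMap.smul_apply, psi_fE]
        rw [FreeMonoid.toList_mul, psiF_append M hM hbr_assoc, mul_smul]
        rw [smul_comm]

lemma psi_Bplus (hM : IsQuasiShuffle br M) (a : A) (x : HBCK A) :
    psi M (Bplus a x) = appLetter a (psi M x) := by
  induction x using MonoidAlgebra.induction_linear with
  | zero => simp
  | add f g hf hg => simp only [map_add, hf, hg]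
  | single f r =>
      rw [Bplus, MonoidAlgebra.mapDomainLinearMap_single]
      rw [hbck_single_eq_smul, hbck_single_eq_smul]
      simp only [map_smul, psi_fE]
      rw [FreeMonoid.toList_of, psiF_single hM, psiT]

lemma map_psi_lTensor_Bplus (hM : IsQuasiShuffle br M) (a : A)
    (X : HBCK A ⊗[ℝ] HBCK A) :
    TensorProduct.map (psi M) (psi M) (LinearMap.lTensor (HBCK A) (Bplus a) X) =
      LinearMap.lTensor (TA A) (appLetter a) (TensorProduct.map (psi M) (psi M) X) := by
  induction X with
  | zero => simp
  | add x y hx hy => simp only [map_add, hx, hy]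
  | tmul x y =>
      simp only [LinearMap.lTensor_tmul, TensorProduct.map_tmul, psi_Bplus hM]

lemma map_psi_mul (hM : IsQuasiShuffle br M)
    (hbr_assoc : ∀ f g h : A →₀ ℝ, brExt br (brExt br f g) h = brExt br f (brExt br g h))
    (X Y : HBCK A ⊗[ℝ] HBCK A) :
    TensorProduct.map (psi M) (psi M) (X * Y) =
      Mten M (TensorProduct.map (psi M) (psi M) X)
             (TensorProduct.map (psi M) (psi M) Y) := by
  induction X with
  | zero => simp
  | add x y hx hy => simp only [add_mul, map_add, LinearMap.add_apply, hx, hy]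
  | tmul x1 x2 =>
    induction Y with
    | zero => simp
    | add x y hx hy => simp only [mul_add, map_add, hx, hy]
    | tmul y1 y2 =>
        rw [Algebra.TensorProduct.tmul_mul_tmul]
        simp only [TensorProduct.map_tmul, Mten_tmul, psi_mul hM hbr_assoc]

mutual

theorem deconc_psiT (hM : IsQuasiShuffle br M)
    (hbr_assoc : ∀ f g h : A →₀ ℝ, brExt br (brExt br f g) h = brExt br f (brExt br g h)) :
    ∀ t : RT A, deconc A (psiT M t) = TensorProduct.map (psi M) (psi M) (deltaT t)
  | RT.node a f => by
      rw [psiT, deconc_appLetter, deltaT, map_add, TensorProduct.map_tmul, psi_one,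
        psi_fE_ofList, psiF_single hM, psiT, map_psi_lTensor_Bplus hM,
        deconc_psiF hM hbr_assoc f]
      rw [add_comm]

theorem deconc_psiF (hM : IsQuasiShuffle br M)
    (hbr_assoc : ∀ f g h : A →₀ ℝ, brExt br (brExt br f g) h = brExt br f (brExt br g h)) :
    ∀ f : List (RT A), deconc A (psiF M f) = TensorProduct.map (psi M) (psi M) (deltaF f)
  | [] => by
      rw [psiF, deconc_eps, deltaF, Algebra.TensorProduct.one_def,
        TensorProduct.map_tmul, psi_one]
  | t :: f => by
      rw [psiF, deconc_M hM, deconc_psiT hM hbr_assoc t, deconc_psiF hM hbr_assoc f,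
        deltaF, map_psi_mul hM hbr_assoc]

end

lemma deltaBCK_fE (f : FreeMonoid (RT A)) :
    deltaBCK A (fE f) = deltaF (FreeMonoid.toList f) := by
  rw [deltaBCK, fE, LinearMap.comp_apply, LinearEquiv.coe_coe,
    MonoidAlgebra.coeffLinearEquiv_apply, MonoidAlgebra.coeff_single]
  erw [Finsupp.lsum_single]
  rw [LinearMap.toSpanSingleton_apply, one_smul]

end PsiAlg

section Uniq

variable {A : Type} {br : A → A → (A →₀ ℝ)} {M : TA A →ₗ[ℝ] TA A →ₗ[ℝ] TA A}
variable (ψ' : HBCK A →ₗ[ℝ] TA A)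

mutual

theorem uniqT (hM : IsQuasiShuffle br M)
    (h1 : ψ' (1 : HBCK A) = wordE [])
    (h2 : ∀ (a : A) (f : List (RT A)), ψ' (fE (FreeMonoid.ofList [RT.node a f])) =
      appLetter a (ψ' (fE (FreeMonoid.ofList f))))
    (h3 : ∀ f g : FreeMonoid (RT A), ψ' (fE (f * g)) = M (ψ' (fE f)) (ψ' (fE g))) :
    ∀ t : RT A, ψ' (fE (FreeMonoid.ofList [t])) = psiT M t
  | RT.node a f => by
      rw [h2 a f, uniqF hM h1 h2 h3 f, psiT]

theorem uniqF (hM : IsQuasiShuffle br M)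
    (h1 : ψ' (1 : HBCK A) = wordE [])
    (h2 : ∀ (a : A) (f : List (RT A)), ψ' (fE (FreeMonoid.ofList [RT.node a f])) =
      appLetter a (ψ' (fE (FreeMonoid.ofList f))))
    (h3 : ∀ f g : FreeMonoid (RT A), ψ' (fE (f * g)) = M (ψ' (fE f)) (ψ' (fE g))) :
    ∀ f : List (RT A), ψ' (fE (FreeMonoid.ofList f)) = psiF M f
  | [] => by
      rw [show fE (FreeMonoid.ofList ([] : List (RT A))) = (1 : HBCK A) from
        (MonoidAlgebra.one_def).symm, h1, psiF]
  | t :: f => by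
      rw [show FreeMonoid.ofList (t :: f) =
        FreeMonoid.ofList [t] * FreeMonoid.ofList f from rfl, h3,
        uniqT hM h1 h2 h3 t, uniqF hM h1 h2 h3 f, psiF]

end

end Uniq

/-- contracting arborification: there is a unique linear map
`ψ : H(A) → T(A)` with `ψ(1) = 1`, `ψ(B⁺_a(f)) = ψ(f)a` and
`ψ(στ) = ψ(σ) ⊛ ψ(τ)`; moreover it intertwines the BCK coproduct with
deconcatenation: `∇ψ = (ψ ⊗ ψ)Δ`. -/
theorem contracting_arborification {A : Type}
    (br : A → A → (A →₀ ℝ))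
    (hbr_comm : ∀ a b : A, br a b = br b a)
    (hbr_assoc : ∀ f g h : A →₀ ℝ, brExt br (brExt br f g) h = brExt br f (brExt br g h))
    (M : TA A →ₗ[ℝ] TA A →ₗ[ℝ] TA A)
    (hM : IsQuasiShuffle br M) :
    ∃! ψ : HBCK A →ₗ[ℝ] TA A,
      ψ (1 : HBCK A) = wordE [] ∧
      (∀ (a : A) (f : List (RT A)),
        ψ (fE (FreeMonoid.ofList [RT.node a f])) =
          appLetter a (ψ (fE (FreeMonoid.ofList f)))) ∧
      (∀ f g : FreeMonoid (RT A),
        ψ (fE (f * g)) = M (ψ (fE f)) (ψ (fE g))) ∧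
      (∀ h : HBCK A,
        deconc A (ψ h) = TensorProduct.map ψ ψ (deltaBCK A h)) := by
  refine ⟨psi M, ⟨psi_one M, ?_, ?_, ?_⟩, ?_⟩
  · intro a f
    rw [psi_fE_ofList, psi_fE_ofList, psiF_single hM, psiT]
  · intro f g
    rw [psi_fE, psi_fE, psi_fE, FreeMonoid.toList_mul, psiF_append M hM hbr_assoc]
  · intro h
    induction h using MonoidAlgebra.induction_linear with
    | zero => simp
    | add f g hf hg => simp only [map_add, hf, hg]
    | single f r =>
        rw [hbck_single_eq_smul]
        simp only [map_smul]
        rw [psi_fE, deconc_psiF hM hbr_assoc, deltaBCK_fE]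
  · rintro ψ' ⟨h1, h2, h3, -⟩
    apply MonoidAlgebra.lhom_ext'
    intro f
    apply LinearMap.ext
    intro r
    simp only [LinearMap.comp_apply, MonoidAlgebra.lsingle_apply]
    rw [hbck_single_eq_smul]
    simp only [map_smul]
    congr 1
    have hu := uniqF ψ' hM h1 h2 h3 (FreeMonoid.toList f)
    rw [FreeMonoid.ofList_toList] at hu
    exact hu.trans (psi_fE M f).symm

end
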